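/- Fix a real number A with 0 < A < 1, positive integers P, Q, set c := P/Q, and let γ, δ be integers with Q·δ − P·γ = 1. Let z be real with 0 < z < A, set U := A^{−c}/z, and define (using Real.log, which satisfies Real.log x = Real.log |x| for x ≠ 0): y^BEM(U) := γ·Real.log U + δ·Real.log(1 − A^{c+1}U) − δ·Real.log(1 − A^{c−1}U); Λ(U) := U·((1 − A^{c+1}U)/(1 − A^{c−1}U))^c (real power of the positive ratio); X^BEM(U) := Λ(U)^{−Q}; and y^ACEH(z) := Real.log((1−A⁻¹z)/(1−Az)). Then y^ACEH(z) = Q·y^BEM(U) + γ·Real.log(X^BEM(U)) − Real.log(A²). -/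

import Mathlib

open Real

/-- Comparison of the Brini–Eynard–Mariño and ACEH spectral curve functions (second identity):
with `c = P/Q`, `Qδ - Pγ = 1`, `U = A^{-c}/z` for `0 < z < A < 1`,
`y^ACEH(z) = Q·y^BEM(U) + γ·log X^BEM(U) - log A²`, where
`y^BEM(U) = γ log U + δ log(1 - A^{c+1}U) - δ log(1 - A^{c-1}U)`,
`Λ(U) = U·((1-A^{c+1}U)/(1-A^{c-1}U))^c`, `X^BEM(U) = Λ(U)^{-Q}`, and
`y^ACEH(z) = log((1-A⁻¹z)/(1-Az))`. -/
theorem stmt_3 (A : ℝ) (hA0 : 0 < A) (hA1 : A < 1) (P Q : ℕ) (hP : 0 < P) (hQ : 0 < Q)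
    (γ δ : ℤ) (hSL : (Q : ℤ) * δ - (P : ℤ) * γ = 1)
    (z : ℝ) (hz0 : 0 < z) (hzA : z < A)
    (c U : ℝ) (hc : c = (P : ℝ) / (Q : ℝ)) (hU : U = A ^ (-c) / z)
    (yBEM ΛU XBEM yACEH : ℝ)
    (hyBEM : yBEM = (γ : ℝ) * Real.log U + (δ : ℝ) * Real.log (1 - A ^ (c + 1) * U)
        - (δ : ℝ) * Real.log (1 - A ^ (c - 1) * U))
    (hΛ : ΛU = U * ((1 - A ^ (c + 1) * U) / (1 - A ^ (c - 1) * U)) ^ c)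
    (hXBEM : XBEM = ΛU ^ (-(Q : ℝ)))
    (hyACEH : yACEH = Real.log ((1 - A⁻¹ * z) / (1 - A * z))) :
    yACEH = (Q : ℝ) * yBEM + (γ : ℝ) * Real.log XBEM - Real.log (A ^ 2) := by
  have hzne : z ≠ 0 := ne_of_gt hz0
  have hAne : A ≠ 0 := ne_of_gt hA0
  have hAz1 : A * z < 1 := by nlinarith
  have hAz0 : 0 < A * z := mul_pos hA0 hz0
  have hAmz : 0 < A - z := by linarith
  have h1Az : 0 < 1 - A * z := by linarith
  have hU0 : 0 < U := by rw [hU]; positivity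
  have e1 : A ^ (c + 1) * U = A / z := by
    rw [hU, ← mul_div_assoc, ← Real.rpow_add hA0]
    have h : c + 1 + -c = 1 := by ring
    rw [h, Real.rpow_one]
  have e2 : A ^ (c - 1) * U = 1 / (A * z) := by
    rw [hU, ← mul_div_assoc, ← Real.rpow_add hA0]
    have h : c - 1 + -c = -1 := by ring
    rw [h, Real.rpow_neg_one]
    field_simp
  have hN : 1 - A ^ (c + 1) * U = (z - A) / z := by rw [e1]; field_simp
  have hD : 1 - A ^ (c - 1) * U = (A * z - 1) / (A * z) := by rw [e2]; field_simp
  have hNne : (1 : ℝ) - A ^ (c + 1) * U ≠ 0 := by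
    rw [hN]; exact div_ne_zero (by linarith) hzne
  have hDne : (1 : ℝ) - A ^ (c - 1) * U ≠ 0 := by
    rw [hD]; exact div_ne_zero (by linarith) (ne_of_gt hAz0)
  have hm1 : A * z - 1 ≠ 0 := by intro h; linarith
  have hm2 : (1 : ℝ) - A * z ≠ 0 := ne_of_gt h1Az
  have hRval : (1 - A ^ (c + 1) * U) / (1 - A ^ (c - 1) * U)
      = A * (A - z) / (1 - A * z) := by
    rw [hN, hD]
    field_simp
    rw [show z - A = -(A - z) by ring, show z * A - 1 = -(1 - z * A) by ring, neg_div_neg_eq]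
  have hRpos : 0 < (1 - A ^ (c + 1) * U) / (1 - A ^ (c - 1) * U) := by
    rw [hRval]; positivity
  have hlogR : Real.log ((1 - A ^ (c + 1) * U) / (1 - A ^ (c - 1) * U))
      = Real.log A + Real.log (A - z) - Real.log (1 - A * z) := by
    rw [hRval, Real.log_div (ne_of_gt (mul_pos hA0 hAmz)) (ne_of_gt h1Az),
      Real.log_mul hAne (ne_of_gt hAmz)]
  have hdiff : Real.log (1 - A ^ (c + 1) * U) - Real.log (1 - A ^ (c - 1) * U)
      = Real.log A + Real.log (A - z) - Real.log (1 - A * z) := by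
    rw [← Real.log_div hNne hDne, hlogR]
  have hΛpos : 0 < ΛU := by
    rw [hΛ]; exact mul_pos hU0 (Real.rpow_pos_of_pos hRpos c)
  have hlogΛ : Real.log ΛU = Real.log U
      + c * (Real.log A + Real.log (A - z) - Real.log (1 - A * z)) := by
    rw [hΛ, Real.log_mul (ne_of_gt hU0) (ne_of_gt (Real.rpow_pos_of_pos hRpos c)),
      Real.log_rpow hRpos, hlogR]
  have hlogX : Real.log XBEM = -(Q : ℝ) * Real.log ΛU := by
    rw [hXBEM, Real.log_rpow hΛpos]
  have hL : yACEH = Real.log (A - z) - Real.log A - Real.log (1 - A * z) := by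
    have h1 : (1 : ℝ) - A⁻¹ * z = (A - z) / A := by field_simp
    rw [hyACEH, h1, Real.log_div (div_ne_zero (ne_of_gt hAmz) hAne) (ne_of_gt h1Az),
      Real.log_div (ne_of_gt hAmz) hAne]
  have hQc : (Q : ℝ) * c = P := by
    rw [hc]
    field_simp
  have hSL' : (Q : ℝ) * δ - (P : ℝ) * γ = 1 := by exact_mod_cast hSL
  have h2 : Real.log (A ^ 2) = 2 * Real.log A := by
    rw [Real.log_pow]; norm_num
  rw [hL, hyBEM, hlogX, hlogΛ, h2]
  linear_combination (-((Q : ℝ) * (δ : ℝ))) * hdiff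
    + (γ : ℝ) * (Real.log A + Real.log (A - z) - Real.log (1 - A * z)) * hQc
    - (Real.log A + Real.log (A - z) - Real.log (1 - A * z)) * hSL'
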